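/- The identity r×r matrix I is an order unit of the pair (Sym_r(ℝ[x]_{(Σ)}), Sym_r(ℝ[x]_{(Σ)})₊): for every symmetric matrix G with entries in ℝ[x]_{(Σ)}, there exists a positive integer N such that N·I + G has positive semidefinite coefficients. -/

import Mathlib

open MvPolynomial Matrix

noncomputable section

/-- The field of rational functions in `n` variables over `ℝ`. -/
abbrev RatField (n : ℕ) := FractionRing (MvPolynomial (Fin n) ℝ)

/-- Inclusion of polynomials into the field of rational functions. -/
noncomputable def ι (n : ℕ) : MvPolynomial (Fin n) ℝ →+* RatField n :=
  algebraMap (MvPolynomial (Fin n) ℝ) (RatField n)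

/-- The linear form `Σ = x₁ + ⋯ + xₙ`. -/
noncomputable def sigma (n : ℕ) : MvPolynomial (Fin n) ℝ := ∑ i, X i

/-- The matrix `Σ_α A_α ⊗ x^α/Σ^{|α|}` determined by a finitely supported family of real
matrix coefficients `A_α`. -/
noncomputable def rep (n r : ℕ) (A : (Fin n →₀ ℕ) →₀ Matrix (Fin r) (Fin r) ℝ) :
    Matrix (Fin r) (Fin r) (RatField n) :=
  A.sum fun α Aα =>
    (ι n (monomial α (1 : ℝ)) / (ι n (sigma n)) ^ (α.sum fun _ e => e)) •
      Aα.map (fun c => ι n (C c))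

/-- `G ∈ Sym_r(ℝ[x]_{(Σ)})₊`: `G = Σ_α A_α x^α/Σ^{|α|}` with all `A_α` positive
semidefinite. -/
def HasPSDCoeffs (n r : ℕ) (G : Matrix (Fin r) (Fin r) (RatField n)) : Prop :=
  ∃ A : (Fin n →₀ ℕ) →₀ Matrix (Fin r) (Fin r) ℝ,
    (∀ α, (A α).PosSemidef) ∧ G = rep n r A

/-- `G ∈ Sym_r(ℝ[x]_{(Σ)})`: `G` is symmetric with all entries in the homogeneous
localization `ℝ[x]_{(Σ)}`. -/
def InSymLoc (n r : ℕ) (G : Matrix (Fin r) (Fin r) (RatField n)) : Prop :=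
  G.IsSymm ∧ ∀ i j, ∃ (d : ℕ) (f : MvPolynomial (Fin n) ℝ), f.IsHomogeneous d ∧
    G i j = ι n f / (ι n (sigma n)) ^ d


lemma aux_coeff_pos {n : ℕ} (D : ℕ) (α : Fin n →₀ ℕ) (hα : α.degree = D) :
    0 < MvPolynomial.coeff α ((∑ i, X i : MvPolynomial (Fin n) ℕ) ^ D) := by
  induction D generalizing α with
  | zero =>
    obtain rfl : α = 0 := (Finsupp.degree_eq_zero_iff α).mp hα
    simp
  | succ D ih =>
    obtain ⟨i, hi⟩ : ∃ i, α i ≠ 0 := by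
      by_contra h
      push_neg at h
      have h0 : α = 0 := Finsupp.ext fun i => h i
      simp [h0] at hα
    have hsingle : Finsupp.single i 1 ≤ α := by
      rw [Finsupp.single_le_iff]; omega
    have hsub : α - Finsupp.single i 1 + Finsupp.single i 1 = α :=
      tsub_add_cancel_of_le hsingle
    have hdeg : (α - Finsupp.single i 1).degree = D := by
      have h1 : ∀ a b : Fin n →₀ ℕ, (a + b).degree = a.degree + b.degree := by
        intro a b; simp [Finsupp.degree_eq_weight_one, map_add]
      have h2 : (Finsupp.single i 1).degree = 1 := by
        exact Finsupp.degree_single i 1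
      have h3 := h1 (α - Finsupp.single i 1) (Finsupp.single i 1)
      rw [hsub, h2, hα] at h3
      omega
    rw [pow_succ, Finset.mul_sum, coeff_sum]
    have hterm : 0 < coeff α ((∑ j, X j : MvPolynomial (Fin n) ℕ) ^ D * X i) := by
      rw [coeff_mul_X', if_pos (Finsupp.mem_support_iff.mpr hi)]
      exact ih _ hdeg
    exact lt_of_lt_of_le hterm
      (Finset.single_le_sum (f := fun s => coeff α ((∑ i, X i : MvPolynomial (Fin n) ℕ) ^ D * X s))
        (fun j _ => Nat.zero_le _) (Finset.mem_univ i))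

lemma psd_aux {r : ℕ} (c : ℝ) (C : Matrix (Fin r) (Fin r) ℝ) (hC : C.IsSymm)
    (hc : ∑ i, ∑ j, |C i j| ≤ c) : (c • (1 : Matrix (Fin r) (Fin r) ℝ) + C).PosSemidef := by
  have hS0 : (0:ℝ) ≤ ∑ i, ∑ j, |C i j| :=
    Finset.sum_nonneg fun i _ => Finset.sum_nonneg fun j _ => abs_nonneg _
  have hc0 : 0 ≤ c := le_trans hS0 hc
  rw [Matrix.posSemidef_iff_dotProduct_mulVec]
  constructor
  · ext i j
    simp only [conjTranspose_apply, Matrix.add_apply, Matrix.smul_apply, Matrix.one_apply,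
      star_trivial, smul_eq_mul]
    rw [hC.apply i j]
    congr 1
    by_cases h : i = j <;> simp [h, eq_comm]
  · intro x
    have hstar : star x = x := funext fun i => star_trivial _
    rw [hstar, add_mulVec, smul_mulVec, one_mulVec, dotProduct_add, dotProduct_smul,
      smul_eq_mul]
    rcases isEmpty_or_nonempty (Fin r) with h | h
    · simp [dotProduct]
    · obtain ⟨i0, -, hi0⟩ := Finset.exists_max_image Finset.univ (fun i => |x i|)
        ⟨Classical.arbitrary (Fin r), Finset.mem_univ _⟩
      set m := |x i0| with hm
      have hm0 : 0 ≤ m := abs_nonneg _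
      have h1 : m * m ≤ x ⬝ᵥ x := by
        have e : m * m = x i0 * x i0 := abs_mul_abs_self _
        rw [dotProduct, e]
        exact Finset.single_le_sum (f := fun j => x j * x j)
          (fun j _ => mul_self_nonneg _) (Finset.mem_univ i0)
      have h2 : |x ⬝ᵥ C *ᵥ x| ≤ (∑ i, ∑ j, |C i j|) * (m * m) := by
        rw [dotProduct, Finset.sum_mul]
        refine le_trans (Finset.abs_sum_le_sum_abs _ _) (Finset.sum_le_sum fun i _ => ?_)
        simp only [mulVec, dotProduct]
        rw [Finset.mul_sum, Finset.sum_mul]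
        refine le_trans (Finset.abs_sum_le_sum_abs _ _) (Finset.sum_le_sum fun j _ => ?_)
        have e : |x i * (C i j * x j)| = |C i j| * (|x i| * |x j|) := by
          rw [abs_mul, abs_mul]; ring
        rw [e]
        have hxi := hi0 i (Finset.mem_univ i)
        have hxj := hi0 j (Finset.mem_univ j)
        exact mul_le_mul_of_nonneg_left (mul_le_mul hxi hxj (abs_nonneg _) hm0)
          (abs_nonneg _)
      have hQ := neg_abs_le (x ⬝ᵥ C *ᵥ x)
      nlinarith [mul_le_mul_of_nonneg_right hc (mul_nonneg hm0 hm0),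
        mul_le_mul_of_nonneg_left h1 hc0]

set_option maxHeartbeats 1000000 in
/-- The identity matrix is an order unit of `(Sym_r(ℝ[x]_{(Σ)}), Sym_r(ℝ[x]_{(Σ)})₊)`:
for every `G ∈ Sym_r(ℝ[x]_{(Σ)})` there is a positive integer `N` such that `N·I + G` has
positive semidefinite coefficients. -/
theorem identity_is_order_unit {n r : ℕ} (hn : 0 < n)
    (G : Matrix (Fin r) (Fin r) (RatField n)) (hG : InSymLoc n r G) :
    ∃ N : ℕ, 0 < N ∧
      HasPSDCoeffs n r ((N : RatField n) • (1 : Matrix (Fin r) (Fin r) (RatField n)) + G) := by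
  obtain ⟨hsym, h2⟩ := hG
  choose d f hhom heq using h2
  have hSne : sigma n ≠ 0 := by
    intro h
    have h1 : MvPolynomial.eval (fun _ : Fin n => (1:ℝ)) (sigma n) = (n : ℝ) := by
      simp [sigma]
    rw [h] at h1
    have h2 : n = 0 := by exact_mod_cast h1.symm.trans (map_zero _)
    omega
  have hι : Function.Injective (ι n) :=
    IsFractionRing.injective (MvPolynomial (Fin n) ℝ) (RatField n)
  have hSg : ι n (sigma n) ≠ 0 := fun h => hSne (hι (by simpa using h))
  set D : ℕ := Finset.univ.sup (fun p : Fin r × Fin r => d p.1 p.2) with hD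
  have hdle : ∀ i j, d i j ≤ D :=
    fun i j => Finset.le_sup (f := fun p : Fin r × Fin r => d p.1 p.2) (Finset.mem_univ (i, j))
  set g : Fin r → Fin r → MvPolynomial (Fin n) ℝ :=
    fun i j => f i j * sigma n ^ (D - d i j) with hg
  have hsig1 : (sigma n).IsHomogeneous 1 := by
    rw [sigma]
    exact IsHomogeneous.sum _ _ _ (fun i _ => isHomogeneous_X _ i)
  have hghom : ∀ i j, (g i j).IsHomogeneous D := by
    intro i j
    have h := (hhom i j).mul (hsig1.pow (D - d i j))
    rwa [one_mul, Nat.add_sub_cancel' (hdle i j)] at h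
  have hGeq : ∀ i j, G i j = ι n (g i j) / ι n (sigma n) ^ D := by
    intro i j
    have hpow : (ι n (sigma n)) ^ D = (ι n (sigma n)) ^ (d i j) * (ι n (sigma n)) ^ (D - d i j) := by
      rw [← pow_add, Nat.add_sub_cancel' (hdle i j)]
    rw [heq i j, hg]
    simp only
    rw [_root_.map_mul, map_pow, hpow, mul_div_mul_right _ _ (pow_ne_zero _ hSg)]
  have hgsym : ∀ i j, g j i = g i j := by
    intro i j
    apply hι
    have h1 := hGeq j i
    have h2 := hGeq i j
    have h3 := hsym.apply i j
    rw [h1, h2, div_eq_div_iff (pow_ne_zero _ hSg) (pow_ne_zero _ hSg)] at h3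
    exact mul_right_cancel₀ (pow_ne_zero _ hSg) h3
  set P : MvPolynomial (Fin n) ℕ := (∑ i, X i) ^ D with hP
  have hmap : sigma n ^ D = MvPolynomial.map (Nat.castRingHom ℝ) P := by
    rw [hP, map_pow, sigma]
    congr 1
    rw [map_sum]
    simp
  set b : (Fin n →₀ ℕ) → ℝ := fun α => coeff α (sigma n ^ D) with hb
  have hbcast : ∀ α, b α = ((coeff α P : ℕ) : ℝ) := by
    intro α; rw [hb]; simp only; rw [hmap, coeff_map]; rfl
  have hb0 : ∀ α, 0 ≤ b α := fun α => by rw [hbcast]; positivity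
  have hb1 : ∀ α, α.degree = D → 1 ≤ b α := by
    intro α hα
    rw [hbcast]
    exact_mod_cast aux_coeff_pos D α hα
  set S : Finset (Fin n →₀ ℕ) := (sigma n ^ D).support with hS
  have hdeg_g : ∀ i j α, coeff α (g i j) ≠ 0 → α.degree = D := by
    intro i j α hne
    by_contra hne'
    exact hne ((hghom i j).coeff_eq_zero hne')
  have hsupg : ∀ i j, (g i j).support ⊆ S := by
    intro i j α hα
    rw [mem_support_iff] at hα
    have hb1' : b α ≠ 0 := by
      have := hb1 α (hdeg_g i j α hα); linarith
    exact mem_support_iff.mpr hb1'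
  set total : ℝ := ∑ i, ∑ j, ∑ α ∈ (g i j).support, |coeff α (g i j)| with htotal
  have htot0 : 0 ≤ total := by
    refine Finset.sum_nonneg fun i _ => Finset.sum_nonneg fun j _ =>
      Finset.sum_nonneg fun α _ => abs_nonneg _
  set N : ℕ := ⌈total⌉₊ + 1 with hN
  have hNtot : total ≤ (N : ℝ) := by
    refine le_trans (Nat.le_ceil total) ?_
    rw [hN]; push_cast; linarith
  have hbound : ∀ α, ∑ i, ∑ j, |coeff α (g i j)| ≤ total := by
    intro α
    refine Finset.sum_le_sum fun i _ => Finset.sum_le_sum fun j _ => ?_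
    by_cases hα : α ∈ (g i j).support
    · exact Finset.single_le_sum (f := fun β => |coeff β (g i j)|)
        (fun β _ => abs_nonneg _) hα
    · rw [notMem_support_iff] at hα
      rw [hα, abs_zero]
      exact Finset.sum_nonneg fun β _ => abs_nonneg _
  set Amat : (Fin n →₀ ℕ) → Matrix (Fin r) (Fin r) ℝ :=
    fun α => ((N : ℝ) * b α) • (1 : Matrix (Fin r) (Fin r) ℝ) +
      Matrix.of (fun i j => coeff α (g i j)) with hA
  have hAzero : ∀ α, α ∉ S → Amat α = 0 := by
    intro α hα
    have hbα : b α = 0 := by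
      by_contra hne
      exact hα (mem_support_iff.mpr hne)
    have hcα : ∀ i j, coeff α (g i j) = 0 := by
      intro i j
      by_contra hne
      exact hα (hsupg i j (mem_support_iff.mpr hne))
    rw [hA]
    ext i j
    simp [hbα, hcα i j]
  set A : (Fin n →₀ ℕ) →₀ Matrix (Fin r) (Fin r) ℝ :=
    Finsupp.onFinset S Amat (fun α h => by by_contra hns; exact h (hAzero α hns)) with hAdef
  have hApply : ∀ α, A α = Amat α := fun α => rfl
  have hpsd : ∀ α, (A α).PosSemidef := by
    intro α
    rw [hApply, hA]
    apply psd_aux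
    · apply Matrix.IsSymm.ext
      intro i j
      show coeff α (g j i) = coeff α (g i j)
      rw [hgsym i j]
    · by_cases hall : ∀ i j, coeff α (g i j) = 0
      · have hz : ∑ i, ∑ j, |(Matrix.of (fun i j => coeff α (g i j))) i j| = 0 := by
          simp [hall]
        rw [hz]
        exact mul_nonneg (Nat.cast_nonneg N) (hb0 α)
      · push_neg at hall
        obtain ⟨i, j, hij⟩ := hall
        have hdeg := hdeg_g i j α hij
        have h1 := hb1 α hdeg
        calc ∑ i, ∑ j, |(Matrix.of (fun i j => coeff α (g i j))) i j|
            = ∑ i, ∑ j, |coeff α (g i j)| := rfl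
          _ ≤ total := hbound α
          _ ≤ (N : ℝ) := hNtot
          _ = (N : ℝ) * 1 := (mul_one _).symm
          _ ≤ (N : ℝ) * b α := by
              exact mul_le_mul_of_nonneg_left h1 (Nat.cast_nonneg N)
  refine ⟨N, Nat.succ_pos _, A, hpsd, ?_⟩
  have hSdeg : ∀ α ∈ S, (α.sum fun _ e => e) = D := by
    intro α hα
    have hne : coeff α (sigma n ^ D) ≠ 0 := mem_support_iff.mp hα
    have hdeg : α.degree = D := by
      by_contra hcon
      have hhom' : (sigma n ^ D).IsHomogeneous D := by
        have := hsig1.pow D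
        rwa [one_mul] at this
      exact hne (hhom'.coeff_eq_zero hcon)
    simpa [Finsupp.degree_apply, Finsupp.sum] using hdeg
  have hrep : rep n r A = ∑ α ∈ S,
      (ι n (monomial α (1:ℝ)) / (ι n (sigma n)) ^ (α.sum fun _ e => e)) •
        (Amat α).map (fun c => ι n (C c)) := by
    rw [rep]
    exact Finsupp.onFinset_sum _ (fun α => by simp)
  rw [hrep]
  ext i j
  rw [Matrix.sum_apply, Matrix.add_apply, Matrix.smul_apply, smul_eq_mul]
  have hterm : ∀ α ∈ S,
      ((ι n (monomial α (1:ℝ)) / (ι n (sigma n)) ^ (α.sum fun _ e => e)) •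
        (Amat α).map (fun c => ι n (C c))) i j
      = ι n (monomial α (((N:ℝ) * (if i = j then 1 else 0)) * b α + coeff α (g i j)))
          / (ι n (sigma n)) ^ D := by
    intro α hα
    rw [Matrix.smul_apply, Matrix.map_apply, smul_eq_mul, hSdeg α hα, div_mul_eq_mul_div]
    congr 1
    rw [← _root_.map_mul]
    congr 1
    rw [mul_comm, C_mul_monomial, mul_one]
    congr 1
    rw [hA]
    simp only [Matrix.add_apply, Matrix.smul_apply, Matrix.one_apply, Matrix.of_apply,
      smul_eq_mul]
    by_cases h : i = j <;> simp [h]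
  rw [Finset.sum_congr rfl hterm, ← Finset.sum_div, ← map_sum]
  have hnum : ∑ α ∈ S, (monomial α) (((N:ℝ) * (if i = j then 1 else 0)) * b α + coeff α (g i j))
      = C ((N:ℝ) * (if i = j then 1 else 0)) * sigma n ^ D + g i j := by
    have hsplit : ∀ α ∈ S, (monomial α) (((N:ℝ) * (if i = j then 1 else 0)) * b α + coeff α (g i j))
        = C ((N:ℝ) * (if i = j then 1 else 0)) * monomial α (b α) + monomial α (coeff α (g i j)) := by
      intro α _
      rw [map_add, C_mul_monomial]
    rw [Finset.sum_congr rfl hsplit, Finset.sum_add_distrib, ← Finset.mul_sum]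
    congr 1
    · congr 1
      exact support_sum_monomial_coeff (sigma n ^ D)
    · calc ∑ α ∈ S, (monomial α) (coeff α (g i j))
          = ∑ α ∈ (g i j).support, (monomial α) (coeff α (g i j)) :=
            (Finset.sum_subset (hsupg i j) (fun α _ hα => by
              rw [notMem_support_iff.mp hα, map_zero])).symm
        _ = g i j := support_sum_monomial_coeff (g i j)
  rw [hnum, _root_.map_add, _root_.map_mul, map_pow, add_div, mul_div_assoc,
    div_self (pow_ne_zero D hSg), mul_one, hGeq i j]
  congr 1
  by_cases h : i = j
  · subst h; simp
  · simp [h, Matrix.one_apply_ne h]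

end
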